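/- Let X be a compactum (a compact perfect metric space with more than one point), let n ≥ 2 be an integer, and let f : X → X be a continuous map. Then F_n(f) is two-sided transitive if and only if SF_n(f) is two-sided transitive; moreover, if F_n(f) is two-sided transitive, then f is two-sided transitive. -/

import Mathlib

open Metric Set TopologicalSpace

variable (X : Type*) [MetricSpace X] (n : ℕ)

/-- The `n`-fold symmetric product `F_n(X)`: nonempty subsets of `X` with at most `n`
points, as a subspace of the nonempty compact subsets of `X` with the Hausdorff metric. -/
abbrev Fn := {A : NonemptyCompacts X // (A : Set X).Finite ∧ (A : Set X).ncard ≤ n}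

/-- The induced map `F_n(f)` on the `n`-fold symmetric product, `A ↦ f(A)`. -/
noncomputable def FnMap (f : X → X) : Fn X n → Fn X n := fun A =>
  ⟨⟨⟨f '' (A.1 : Set X), (A.2.1.image f).isCompact⟩, A.1.nonempty.image f⟩,
    A.2.1.image f, le_trans (Set.ncard_image_le A.2.1) A.2.2⟩

/-- `F_1(X) ⊆ F_n(X)`: the set of singletons. -/
def F1 : Set (Fn X n) := {A | ∃ x : X, (A.1 : Set X) = {x}}

/-- The setoid collapsing `F_1(X)` to a point. -/
def SFnSetoid : Setoid (Fn X n) where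
  r A B := A = B ∨ (A ∈ F1 X n ∧ B ∈ F1 X n)
  iseqv := by
    refine ⟨fun _ => Or.inl rfl, fun h => h.imp Eq.symm And.symm, fun h₁ h₂ => ?_⟩
    rcases h₁ with rfl | h₁
    · exact h₂
    · rcases h₂ with rfl | h₂
      · exact Or.inr h₁
      · exact Or.inr ⟨h₁.1, h₂.2⟩

/-- The `n`-fold symmetric product suspension `SF_n(X) = F_n(X)/F_1(X)`,
with the quotient topology. -/
abbrev SFn := Quotient (SFnSetoid X n)

/-- The quotient map `q : F_n(X) → SF_n(X)`. -/
def SFnQ : Fn X n → SFn X n := Quotient.mk (SFnSetoid X n)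

/-- The induced map `SF_n(f)` on the suspension, with `SF_n(f) ∘ q = q ∘ F_n(f)`. -/
noncomputable def SFnMap (f : X → X) : SFn X n → SFn X n :=
  Quotient.lift (fun A => SFnQ X n (FnMap X n f A))
    (fun A B h => Quotient.sound (by
      rcases h with rfl | ⟨⟨x, hx⟩, ⟨y, hy⟩⟩
      · exact Or.inl rfl
      · exact Or.inr ⟨⟨f x, by simp [FnMap, hx]⟩, ⟨f y, by simp [FnMap, hy]⟩⟩))

/-- The metric `ρ` on `SF_n(X)`:
`ρ(χ₁,χ₂) = H(F_1(X) ∪ q⁻¹(χ₁), F_1(X) ∪ q⁻¹(χ₂))` where `H` is the Hausdorff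
distance between subsets of `F_n(X)`. -/
noncomputable def SFnDist : SFn X n → SFn X n → ℝ := fun a b =>
  Metric.hausdorffDist (F1 X n ∪ SFnQ X n ⁻¹' {a}) (F1 X n ∪ SFnQ X n ⁻¹' {b})

/-- `g` is two-sided transitive: `g` is a homeomorphism and some full orbit
`{g^k(z) : k ∈ ℤ}` is dense. -/
def TwoSidedTransitive {Z : Type*} [TopologicalSpace Z] (g : Z → Z) : Prop :=
  IsHomeomorph g ∧ ∃ e : Equiv.Perm Z, ⇑e = g ∧
    ∃ z : Z, Dense (Set.range fun k : ℤ => (e ^ k) z)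

/- ===================== auxiliary lemmas ===================== -/

section Aux

variable {X : Type*} [MetricSpace X] {n : ℕ}

theorem Fn.ext' {A B : Fn X n} (h : (A.1 : Set X) = (B.1 : Set X)) : A = B :=
  Subtype.ext (NonemptyCompacts.ext h)

theorem FnMap_coe (f : X → X) (A : Fn X n) :
    ((FnMap X n f A).1 : Set X) = f '' (A.1 : Set X) := rfl

theorem Fn.dist_eq' (A B : Fn X n) :
    dist A B = hausdorffDist (A.1 : Set X) (B.1 : Set X) := rfl

theorem Fn.edist_ne_top (A B : Fn X n) :
    EMetric.hausdorffEdist (A.1 : Set X) (B.1 : Set X) ≠ ⊤ :=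
  Metric.hausdorffEdist_ne_top_of_nonempty_of_bounded A.1.nonempty B.1.nonempty
    A.1.isCompact.isBounded B.1.isCompact.isBounded

theorem FnMap_continuous [CompactSpace X] {f : X → X} (hf : Continuous f) :
    Continuous (FnMap X n f) := by
  rw [Metric.continuous_iff]
  intro A ε hε
  obtain ⟨δ, hδ, hd⟩ := Metric.uniformContinuous_iff.1
    (CompactSpace.uniformContinuous_of_continuous hf) (ε/2) (by linarith)
  refine ⟨δ, hδ, fun B hB => ?_⟩
  have key : ∀ C D : Fn X n, hausdorffDist (C.1 : Set X) (D.1 : Set X) < δ →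
      ∀ y ∈ f '' (C.1 : Set X), ∃ z ∈ f '' (D.1 : Set X), dist y z ≤ ε/2 := by
    intro C D hCD y hy
    obtain ⟨c, hc, rfl⟩ := hy
    obtain ⟨d, hd', hcd⟩ :=
      Metric.exists_dist_lt_of_hausdorffDist_lt hc hCD (Fn.edist_ne_top C D)
    exact ⟨f d, Set.mem_image_of_mem f hd', (hd hcd).le⟩
  rw [Fn.dist_eq'] at hB ⊢
  have hB' : hausdorffDist (A.1 : Set X) (B.1 : Set X) < δ := by
    rwa [hausdorffDist_comm] at hB
  have hle : hausdorffDist ((FnMap X n f B).1 : Set X) ((FnMap X n f A).1 : Set X) ≤ ε/2 := by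
    rw [FnMap_coe, FnMap_coe]
    exact hausdorffDist_le_of_mem_dist (by linarith) (key B A hB) (key A B hB')
  linarith

variable (n)

def sing (hn : 1 ≤ n) (x : X) : Fn X n :=
  ⟨⟨⟨{x}, isCompact_singleton⟩, Set.singleton_nonempty x⟩, Set.finite_singleton x,
    le_trans (le_of_eq (Set.ncard_singleton x)) hn⟩

theorem sing_coe (hn : 1 ≤ n) (x : X) : ((sing n hn x).1 : Set X) = {x} := rfl

theorem sing_mem_F1 (hn : 1 ≤ n) (x : X) : sing n hn x ∈ F1 X n := ⟨x, rfl⟩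

def pairFn (hn : 2 ≤ n) (x y : X) : Fn X n :=
  ⟨⟨⟨{x, y}, ((Set.finite_singleton y).insert x).isCompact⟩, ⟨x, Or.inl rfl⟩⟩,
    (Set.finite_singleton y).insert x,
    le_trans (le_trans (Set.ncard_insert_le x {y}) (by rw [Set.ncard_singleton])) hn⟩

theorem pairFn_coe (hn : 2 ≤ n) (x y : X) : ((pairFn n hn x y).1 : Set X) = {x, y} := rfl

theorem pairFn_not_mem_F1 (hn : 2 ≤ n) {x y : X} (hxy : x ≠ y) :
    pairFn n hn x y ∉ F1 X n := by
  rintro ⟨z, hz⟩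
  rw [pairFn_coe] at hz
  have hx : x ∈ ({z} : Set X) := hz ▸ Set.mem_insert x {y}
  have hy : y ∈ ({z} : Set X) := hz ▸ Set.mem_insert_of_mem x rfl
  exact hxy (hx.trans hy.symm)

theorem hausdorffDist_singleton_le (x y : X) (s : Set X) (hxs : x ∈ s)
    (hb : ∀ z ∈ s, dist z y ≤ dist x y) :
    hausdorffDist s ({y} : Set X) ≤ dist x y := by
  refine hausdorffDist_le_of_mem_dist dist_nonneg (fun z hz => ⟨y, rfl, hb z hz⟩) ?_
  rintro z rfl
  exact ⟨x, hxs, by rw [dist_comm]⟩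

theorem sing_continuous (hn : 1 ≤ n) : Continuous (sing (X := X) n hn) := by
  rw [Metric.continuous_iff]
  intro x ε hε
  refine ⟨ε, hε, fun y hy => ?_⟩
  have h1 : dist (sing n hn y) (sing n hn x) ≤ dist y x := by
    rw [Fn.dist_eq', sing_coe, sing_coe]
    exact hausdorffDist_singleton_le y x {y} rfl (by rintro z rfl; exact le_refl _)
  exact lt_of_le_of_lt h1 hy

theorem F1_eq_range (hn : 1 ≤ n) : F1 X n = Set.range (sing (X := X) n hn) := by
  ext A
  constructor
  · rintro ⟨x, hx⟩
    exact ⟨x, Fn.ext' hx.symm⟩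
  · rintro ⟨x, rfl⟩
    exact ⟨x, rfl⟩

theorem isClosed_F1 [CompactSpace X] (hn : 1 ≤ n) : IsClosed (F1 X n) := by
  rw [F1_eq_range n hn]
  exact (isCompact_range (sing_continuous n hn)).isClosed

theorem exists_not_mem_F1 [CompactSpace X] (hX : Perfect (Set.univ : Set X)) (hn : 2 ≤ n)
    {U : Set (Fn X n)} (hU : IsOpen U) (hUne : U.Nonempty) :
    ∃ B ∈ U, B ∉ F1 X n := by
  obtain ⟨A, hA⟩ := hUne
  by_cases hAF1 : A ∈ F1 X n
  · obtain ⟨x, hx⟩ := hAF1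
    obtain ⟨ε, hε, hball⟩ := Metric.isOpen_iff.1 hU A hA
    have hacc := accPt_iff_nhds.1 (hX.acc x (Set.mem_univ x))
    obtain ⟨y, hy, hyx⟩ := hacc (ball x ε) (ball_mem_nhds x hε)
    refine ⟨pairFn n hn x y, hball ?_, pairFn_not_mem_F1 n hn (Ne.symm hyx)⟩
    rw [Metric.mem_ball, Fn.dist_eq', pairFn_coe, hx]
    have h1 : hausdorffDist ({x, y} : Set X) ({x} : Set X) ≤ dist y x := by
      refine hausdorffDist_singleton_le y x {x, y} (Set.mem_insert_of_mem x rfl) ?_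
      rintro z (rfl | rfl)
      · simp [dist_nonneg]
      · exact le_refl _
    have h2 : dist y x < ε := by rw [dist_comm]; exact Metric.mem_ball'.1 hy.1
    linarith
  · exact ⟨A, hA, hAF1⟩

/- quotient lemmas -/

theorem SFnQ_eq_iff {A B : Fn X n} :
    SFnQ X n A = SFnQ X n B ↔ (A = B ∨ (A ∈ F1 X n ∧ B ∈ F1 X n)) := by
  constructor
  · intro h
    exact Quotient.exact h
  · intro h
    exact Quotient.sound h

theorem SFnQ_continuous : Continuous (SFnQ X n) := continuous_quotient_mk'

theorem SFnQ_surjective : Function.Surjective (SFnQ X n) := Quotient.exists_rep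

theorem isOpen_SFnQ_image {V : Set (Fn X n)} (hV : IsOpen V) (hV1 : ∀ B ∈ V, B ∉ F1 X n) :
    IsOpen (SFnQ X n '' V) := by
  have hpre : SFnQ X n ⁻¹' (SFnQ X n '' V) = V := by
    ext B
    constructor
    · rintro ⟨C, hC, hCB⟩
      rcases (SFnQ_eq_iff n).1 hCB with rfl | ⟨hC1, _⟩
      · exact hC
      · exact absurd hC1 (hV1 C hC)
    · exact fun hB => ⟨B, hB, rfl⟩
  rw [← (isQuotientMap_quotient_mk' (s := SFnSetoid X n)).isOpen_preimage]
  show IsOpen (SFnQ X n ⁻¹' (SFnQ X n '' V))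
  rw [hpre]; exact hV

theorem SFnQ_preimage_F1point {A : Fn X n} (hA : A ∈ F1 X n) :
    SFnQ X n ⁻¹' {SFnQ X n A} = F1 X n := by
  ext B
  simp only [Set.mem_preimage, Set.mem_singleton_iff]
  rw [SFnQ_eq_iff]
  constructor
  · rintro (rfl | ⟨h, _⟩)
    · exact hA
    · exact h
  · exact fun h => Or.inr ⟨h, hA⟩

theorem isClosed_FX [CompactSpace X] (hn : 1 ≤ n) {A : Fn X n} (hA : A ∈ F1 X n) :
    IsClosed ({SFnQ X n A} : Set (SFn X n)) := by
  rw [← (isQuotientMap_quotient_mk' (s := SFnSetoid X n)).isClosed_preimage]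
  show IsClosed (SFnQ X n ⁻¹' {SFnQ X n A})
  rw [SFnQ_preimage_F1point n hA]
  exact isClosed_F1 n hn

/- semiconjugacy for integer powers -/

theorem perm_semiconj_zpow {W Z : Type*} (p : W → Z) (P : Equiv.Perm W) (e : Equiv.Perm Z)
    (h : ∀ w, p (P w) = e (p w)) : ∀ (k : ℤ) (w : W), p ((P ^ k) w) = (e ^ k) (p w) := by
  have hinv : ∀ w, p (P⁻¹ w) = e⁻¹ (p w) := fun w =>
    e.injective (by rw [← h, Equiv.Perm.inv_def, Equiv.Perm.inv_def, Equiv.apply_symm_apply, Equiv.apply_symm_apply])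
  intro k
  induction k using Int.induction_on with
  | zero => intro w; simp
  | succ i ih =>
      intro w
      rw [zpow_add_one, zpow_add_one, Equiv.Perm.mul_apply, Equiv.Perm.mul_apply, ih, h]
  | pred i ih =>
      intro w
      rw [zpow_sub_one, zpow_sub_one, Equiv.Perm.mul_apply, Equiv.Perm.mul_apply, ih, hinv]

end Aux

section Homeo

variable {X : Type*} [MetricSpace X] {n : ℕ}

theorem FnMap_FnMap (f g : X → X) (A : Fn X n) :
    FnMap X n g (FnMap X n f A) = FnMap X n (g ∘ f) A :=
  Fn.ext' (by rw [FnMap_coe, FnMap_coe, FnMap_coe, Set.image_image]; rfl)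

variable [CompactSpace X] {f : X → X}

theorem invFun_continuous (hf : Continuous f) (hb : Function.Bijective f) :
    Continuous ⇑(Equiv.ofBijective f hb).symm := by
  have : Continuous ⇑(Equiv.ofBijective f hb) := hf
  exact (Continuous.homeoOfEquivCompactToT2 this).symm.continuous

/-- The homeomorphism of `Fn X n` induced by a continuous bijection `f`. -/
noncomputable def FnHomeo (hf : Continuous f) (hb : Function.Bijective f) :
    Fn X n ≃ₜ Fn X n where
  toFun := FnMap X n f
  invFun := FnMap X n ⇑(Equiv.ofBijective f hb).symm
  left_inv A := by
    refine Fn.ext' ?_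
    rw [FnMap_coe, FnMap_coe, Set.image_image]
    have : ∀ a : X, (Equiv.ofBijective f hb).symm (f a) = a := fun a =>
      Equiv.ofBijective_symm_apply_apply f hb a
    simp only [this, Set.image_id']
  right_inv A := by
    refine Fn.ext' ?_
    rw [FnMap_coe, FnMap_coe, Set.image_image]
    have : ∀ a : X, f ((Equiv.ofBijective f hb).symm a) = a := fun a =>
      (Equiv.ofBijective f hb).apply_symm_apply a
    simp only [this, Set.image_id']
  continuous_toFun := FnMap_continuous hf
  continuous_invFun := FnMap_continuous (invFun_continuous hf hb)

theorem FnHomeo_coe (hf : Continuous f) (hb : Function.Bijective f) :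
    ⇑(FnHomeo hf hb) = FnMap X n f := rfl

omit [CompactSpace X] in
theorem SFnMap_mk (g : X → X) (A : Fn X n) :
    SFnMap X n g (SFnQ X n A) = SFnQ X n (FnMap X n g A) := rfl

theorem SFnMap_continuous {g : X → X} (hg : Continuous g) : Continuous (SFnMap X n g) :=
  Continuous.quotient_lift ((SFnQ_continuous n).comp (FnMap_continuous hg)) _

/-- The homeomorphism of `SFn X n` induced by a continuous bijection `f`. -/
noncomputable def SFnHomeo (hf : Continuous f) (hb : Function.Bijective f) :
    SFn X n ≃ₜ SFn X n where
  toFun := SFnMap X n f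
  invFun := SFnMap X n ⇑(Equiv.ofBijective f hb).symm
  left_inv := by
    refine Quotient.ind fun A => ?_
    show SFnMap X n _ (SFnMap X n f (SFnQ X n A)) = SFnQ X n A
    rw [SFnMap_mk, SFnMap_mk]
    refine congrArg (SFnQ X n) (Fn.ext' ?_)
    rw [FnMap_coe, FnMap_coe, Set.image_image]
    have : ∀ a : X, (Equiv.ofBijective f hb).symm (f a) = a := fun a =>
      Equiv.ofBijective_symm_apply_apply f hb a
    simp only [this, Set.image_id']
  right_inv := by
    refine Quotient.ind fun A => ?_
    show SFnMap X n f (SFnMap X n _ (SFnQ X n A)) = SFnQ X n A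
    rw [SFnMap_mk, SFnMap_mk]
    refine congrArg (SFnQ X n) (Fn.ext' ?_)
    rw [FnMap_coe, FnMap_coe, Set.image_image]
    have : ∀ a : X, f ((Equiv.ofBijective f hb).symm a) = a := fun a =>
      (Equiv.ofBijective f hb).apply_symm_apply a
    simp only [this, Set.image_id']
  continuous_toFun := SFnMap_continuous hf
  continuous_invFun := SFnMap_continuous (invFun_continuous hf hb)

theorem SFnHomeo_coe (hf : Continuous f) (hb : Function.Bijective f) :
    ⇑(SFnHomeo hf hb) = SFnMap X n f := rfl

omit [CompactSpace X] in
/-- Integer powers of a permutation realizing `FnMap f` act on underlying sets as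
integer powers of `f`. -/
theorem perm_pow_coe (hb : Function.Bijective f) (e : Equiv.Perm (Fn X n))
    (hce : ⇑e = FnMap X n f) :
    ∀ (k : ℤ) (A : Fn X n),
      (((e ^ k) A).1 : Set X) = ⇑(Equiv.ofBijective f hb ^ k) '' (A.1 : Set X) := by
  set ef := Equiv.ofBijective f hb with hef
  have hcoe : ∀ A : Fn X n, ((e A).1 : Set X) = f '' (A.1 : Set X) := by
    intro A; rw [show e A = FnMap X n f A from congrFun hce A, FnMap_coe]
  have hinv : ∀ A : Fn X n, ((e⁻¹ A).1 : Set X) = ⇑ef.symm '' (A.1 : Set X) := by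
    intro A
    have h1 : f '' ((e⁻¹ A).1 : Set X) = (A.1 : Set X) := by
      rw [← hcoe, Equiv.Perm.inv_def, Equiv.apply_symm_apply]
    have h2 : f '' (⇑ef.symm '' (A.1 : Set X)) = (A.1 : Set X) := by
      rw [Set.image_image]
      have : ∀ a : X, f (ef.symm a) = a := fun a => ef.apply_symm_apply a
      simp only [this, Set.image_id']
    exact (Set.image_injective.2 hb.1) (h1.trans h2.symm)
  intro k
  induction k using Int.induction_on with
  | zero => intro A; simp
  | succ i ih =>
      intro A
      rw [zpow_add_one, zpow_add_one, Equiv.Perm.mul_apply, ih, hcoe,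
        Equiv.Perm.coe_mul, Set.image_comp]
      rfl
  | pred i ih =>
      intro A
      rw [zpow_sub_one, zpow_sub_one, Equiv.Perm.mul_apply, ih, hinv,
        Equiv.Perm.coe_mul, Set.image_comp]
      rfl

end Homeo

theorem stmt17 (X : Type*) [MetricSpace X] [CompactSpace X] [Nontrivial X]
    (hX : Perfect (Set.univ : Set X))
    (n : ℕ) (hn : 2 ≤ n) (f : X → X) (hf : Continuous f) :
    (TwoSidedTransitive (FnMap X n f) ↔ TwoSidedTransitive (SFnMap X n f)) ∧
    (TwoSidedTransitive (FnMap X n f) → TwoSidedTransitive f) := by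
  have hn1 : 1 ≤ n := le_trans one_le_two hn
  -- Transitivity of `F_n(f)` forces `f` to be a bijection.
  have partA : TwoSidedTransitive (FnMap X n f) → Function.Bijective f := by
    rintro ⟨hhom, -⟩
    have hb := hhom.bijective
    constructor
    · intro x y hxy
      have h1 : FnMap X n f (sing n hn1 x) = FnMap X n f (sing n hn1 y) := by
        refine Fn.ext' ?_
        rw [FnMap_coe, FnMap_coe, sing_coe, sing_coe, Set.image_singleton,
          Set.image_singleton, hxy]
      have h2 := hb.1 h1
      have h3 : ({x} : Set X) = {y} := by
        rw [← sing_coe n hn1 x, ← sing_coe n hn1 y, h2]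
      exact Set.singleton_eq_singleton_iff.1 h3
    · intro x
      obtain ⟨A, hA⟩ := hb.2 (sing n hn1 x)
      have h1 : f '' (A.1 : Set X) = {x} := by rw [← FnMap_coe, hA, sing_coe]
      obtain ⟨a, ha⟩ := A.1.nonempty
      have h2 : f a ∈ ({x} : Set X) := h1 ▸ Set.mem_image_of_mem f ha
      exact ⟨a, h2⟩
  -- Transitivity of `SF_n(f)` forces `f` to be a bijection.
  have partC' : TwoSidedTransitive (SFnMap X n f) → Function.Bijective f := by
    rintro ⟨hhom, -⟩
    have hb := hhom.bijective
    constructor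
    · intro a b hab
      by_contra hne
      have hA1 : pairFn n hn a b ∉ F1 X n := pairFn_not_mem_F1 n hn hne
      have hFA : FnMap X n f (pairFn n hn a b) ∈ F1 X n := by
        refine ⟨f a, ?_⟩
        rw [FnMap_coe, pairFn_coe, Set.image_insert_eq, Set.image_singleton, ← hab]
        simp
      have hFs : FnMap X n f (sing n hn1 a) ∈ F1 X n :=
        ⟨f a, by rw [FnMap_coe, sing_coe, Set.image_singleton]⟩
      have heq : SFnMap X n f (SFnQ X n (pairFn n hn a b)) =
          SFnMap X n f (SFnQ X n (sing n hn1 a)) := by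
        rw [SFnMap_mk, SFnMap_mk]
        exact Quotient.sound (Or.inr ⟨hFA, hFs⟩)
      have h2 := hb.1 heq
      rcases (SFnQ_eq_iff n).1 h2 with h3 | ⟨h3, -⟩
      · have h4 : ({a, b} : Set X) = {a} := by
          rw [← pairFn_coe n hn a b, ← sing_coe n hn1 a, h3]
        have h5 : b ∈ ({a} : Set X) := h4 ▸ Set.mem_insert_of_mem a rfl
        rw [Set.mem_singleton_iff] at h5
        exact hne h5.symm
      · exact hA1 h3
    · intro x
      obtain ⟨y, hy⟩ := exists_ne x
      have hBns : pairFn n hn x y ∉ F1 X n := pairFn_not_mem_F1 n hn (Ne.symm hy)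
      obtain ⟨χ, hχ⟩ := hb.2 (SFnQ X n (pairFn n hn x y))
      obtain ⟨A, rfl⟩ := SFnQ_surjective n χ
      rw [SFnMap_mk] at hχ
      rcases (SFnQ_eq_iff n).1 hχ with h3 | ⟨-, h3⟩
      · have h4 : f '' (A.1 : Set X) = {x, y} := by rw [← FnMap_coe, h3, pairFn_coe]
        have h5 : x ∈ f '' (A.1 : Set X) := h4 ▸ Set.mem_insert x {y}
        obtain ⟨a, -, ha⟩ := h5
        exact ⟨a, ha⟩
      · exact absurd h3 hBns
  -- Transitivity of `F_n(f)` implies transitivity of `f`.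
  have part2 : TwoSidedTransitive (FnMap X n f) → TwoSidedTransitive f := by
    intro hT
    obtain ⟨hhom, e, hce, A, hdense⟩ := hT
    have hb : Function.Bijective f := partA ⟨hhom, e, hce, A, hdense⟩
    set ef := Equiv.ofBijective f hb with hef
    have hfhomeo : IsHomeomorph f := isHomeomorph_iff_continuous_bijective.2 ⟨hf, hb⟩
    obtain ⟨x, hx⟩ := A.1.nonempty
    refine ⟨hfhomeo, ef, rfl, x, ?_⟩
    rw [Metric.dense_iff]
    intro u r hr
    obtain ⟨B, hB1, k, rfl⟩ := Metric.dense_iff.1 hdense (sing n hn1 u) r hr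
    have hdist : hausdorffDist (((e ^ k) A).1 : Set X) ({u} : Set X) < r := by
      have h6 := Metric.mem_ball.1 hB1
      rwa [Fn.dist_eq', sing_coe] at h6
    have hmem : (ef ^ k) x ∈ (((e ^ k) A).1 : Set X) := by
      rw [perm_pow_coe hb e hce k A]
      exact Set.mem_image_of_mem _ hx
    obtain ⟨y, hy, hdy⟩ := Metric.exists_dist_lt_of_hausdorffDist_lt hmem hdist
      (by rw [← sing_coe n hn1 u]; exact Fn.edist_ne_top ((e ^ k) A) (sing n hn1 u))
    rw [Set.mem_singleton_iff] at hy
    subst hy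
    exact ⟨(ef ^ k) x, Metric.mem_ball.2 hdy, k, rfl⟩
  -- Transitivity of `F_n(f)` implies transitivity of `SF_n(f)`.
  have partB : TwoSidedTransitive (FnMap X n f) → TwoSidedTransitive (SFnMap X n f) := by
    intro hT
    obtain ⟨hhom, e, hce, A, hdense⟩ := hT
    have hb : Function.Bijective f := partA ⟨hhom, e, hce, A, hdense⟩
    refine ⟨SFnHomeo_coe hf hb ▸ (SFnHomeo hf hb).isHomeomorph,
      (SFnHomeo hf hb).toEquiv, rfl, SFnQ X n A, ?_⟩
    have hsemi : ∀ B : Fn X n, SFnQ X n (e B) = (SFnHomeo hf hb).toEquiv (SFnQ X n B) := by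
      intro B
      show SFnQ X n (e B) = SFnMap X n f (SFnQ X n B)
      rw [SFnMap_mk, congrFun hce B]
    have hpow := perm_semiconj_zpow (SFnQ X n) e (SFnHomeo hf hb).toEquiv hsemi
    have hr : (Set.range fun k : ℤ => ((SFnHomeo hf hb).toEquiv ^ k) (SFnQ X n A)) =
        SFnQ X n '' (Set.range fun k : ℤ => (e ^ k) A) := by
      rw [← Set.range_comp]
      exact congrArg Set.range (funext fun k => (hpow k A).symm)
    rw [hr]
    exact ((SFnQ_surjective n).denseRange).dense_image (SFnQ_continuous n) hdense
  -- Transitivity of `SF_n(f)` implies transitivity of `F_n(f)`.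
  have partC : TwoSidedTransitive (SFnMap X n f) → TwoSidedTransitive (FnMap X n f) := by
    intro hT
    obtain ⟨hhom, e', hce', z, hdense⟩ := hT
    have hb : Function.Bijective f := partC' ⟨hhom, e', hce', z, hdense⟩
    obtain ⟨A, rfl⟩ := SFnQ_surjective n z
    set E : Equiv.Perm (Fn X n) := (FnHomeo hf hb).toEquiv with hE
    have hcE : ⇑E = FnMap X n f := rfl
    have hsemi : ∀ B : Fn X n, SFnQ X n (E B) = e' (SFnQ X n B) := by
      intro B
      have h1 : e' (SFnQ X n B) = SFnMap X n f (SFnQ X n B) := congrFun hce' _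
      rw [h1, SFnMap_mk]
      rfl
    have hpow := perm_semiconj_zpow (SFnQ X n) E e' hsemi
    have hAF1 : A ∉ F1 X n := by
      intro hA
      have hfwd : ∀ B : Fn X n, B ∈ F1 X n → E B ∈ F1 X n := by
        rintro B ⟨x, hxB⟩
        exact ⟨f x, by rw [show ((E B).1 : Set X) = f '' (B.1 : Set X) from rfl, hxB,
          Set.image_singleton]⟩
      have hbwd : ∀ B : Fn X n, B ∈ F1 X n → E⁻¹ B ∈ F1 X n := by
        rintro B ⟨x, hxB⟩
        refine ⟨(Equiv.ofBijective f hb).symm x, ?_⟩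
        rw [show ((E⁻¹ B).1 : Set X) = ⇑(Equiv.ofBijective f hb).symm '' (B.1 : Set X) from rfl,
          hxB, Set.image_singleton]
      have key : ∀ k : ℤ, ∀ B : Fn X n, B ∈ F1 X n → (E ^ k) B ∈ F1 X n := by
        intro k
        induction k using Int.induction_on with
        | zero => intro B hB; simpa using hB
        | succ i ih =>
            intro B hB
            rw [zpow_add_one, Equiv.Perm.mul_apply]
            exact ih _ (hfwd B hB)
        | pred i ih =>
            intro B hB
            rw [zpow_sub_one, Equiv.Perm.mul_apply]
            exact ih _ (hbwd B hB)
      have hrange : (Set.range fun k : ℤ => (e' ^ k) (SFnQ X n A)) = {SFnQ X n A} := by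
        apply Set.eq_singleton_iff_unique_mem.2
        refine ⟨⟨0, by simp⟩, ?_⟩
        rintro χ ⟨k, rfl⟩
        show (e' ^ k) (SFnQ X n A) = SFnQ X n A
        rw [← hpow k A]
        exact Quotient.sound (Or.inr ⟨key k A hA, hA⟩)
      obtain ⟨x0, y0, hxy0⟩ := exists_pair_ne X
      have hB0 : pairFn n hn x0 y0 ∉ F1 X n := pairFn_not_mem_F1 n hn hxy0
      have hne0 : SFnQ X n (pairFn n hn x0 y0) ≠ SFnQ X n A := by
        intro hEq
        rcases (SFnQ_eq_iff n).1 hEq with h3 | ⟨h3, -⟩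
        · exact hB0 (h3 ▸ hA)
        · exact hB0 h3
      have hUopen : IsOpen ({SFnQ X n A} : Set (SFn X n))ᶜ := (isClosed_FX n hn1 hA).isOpen_compl
      obtain ⟨χ, hχ1, hχ2⟩ := hdense.inter_open_nonempty _ hUopen
        ⟨SFnQ X n (pairFn n hn x0 y0), hne0⟩
      rw [hrange] at hχ2
      exact hχ1 hχ2
    refine ⟨FnHomeo_coe hf hb ▸ (FnHomeo hf hb).isHomeomorph, E, hcE, A, ?_⟩
    rw [dense_iff_inter_open]
    intro U hU hUne
    obtain ⟨B, hBU, hBF1⟩ := exists_not_mem_F1 n hX hn hU hUne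
    have hV : IsOpen (U ∩ (F1 X n)ᶜ) := hU.inter (isClosed_F1 n hn1).isOpen_compl
    have hVq : IsOpen (SFnQ X n '' (U ∩ (F1 X n)ᶜ)) :=
      isOpen_SFnQ_image n hV fun C hC => hC.2
    have hVne : (SFnQ X n '' (U ∩ (F1 X n)ᶜ)).Nonempty := ⟨SFnQ X n B, B, ⟨hBU, hBF1⟩, rfl⟩
    obtain ⟨χ, hχ1, hχ2⟩ := hdense.inter_open_nonempty _ hVq hVne
    obtain ⟨k, rfl⟩ := hχ2
    obtain ⟨C, ⟨hCU, hCF1⟩, hCχ⟩ := hχ1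
    have hCE : SFnQ X n C = SFnQ X n ((E ^ k) A) := by rw [hCχ, hpow k A]
    rcases (SFnQ_eq_iff n).1 hCE with h3 | ⟨h3, -⟩
    · exact ⟨C, hCU, k, h3.symm⟩
    · exact absurd h3 hCF1
  exact ⟨⟨partB, partC⟩, part2⟩
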